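/- Let φ : X → Y be a code between shift spaces with X a shift of finite type. If φ is right continuing, then φ has a right continuing retract. -/

import Mathlib

open Set Filter

/-- The product topology on `ℤ → A`, where the alphabet `A` carries the
discrete topology. -/
def seqTop (A : Type*) : TopologicalSpace (ℤ → A) :=
  @Pi.topologicalSpace ℤ (fun _ => A) (fun _ => ⊥)

/-- The shift map `σ`, defined by `σ(x)_i = x_{i+1}`. -/
def shiftMap {A : Type*} (x : ℤ → A) : ℤ → A := fun i => x (i + 1)

/-- A shift space: a nonempty, closed, shift-invariant subset of `A^ℤ`. -/
def IsShiftSpace {A : Type*} (X : Set (ℤ → A)) : Prop :=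
  X.Nonempty ∧ @IsClosed _ (seqTop A) X ∧ shiftMap '' X = X

/-- The word `u` occurs in `x` at coordinate `i`. -/
def OccursAt {A : Type*} (x : ℤ → A) (u : List A) (i : ℤ) : Prop :=
  ∀ k : Fin u.length, x (i + ((k : ℕ) : ℤ)) = u.get k

/-- `u` is a word of the language `B(X)` of `X`. -/
def IsWordOf {A : Type*} (X : Set (ℤ → A)) (u : List A) : Prop :=
  ∃ x ∈ X, OccursAt x u 0

/-- A shift of finite type: a shift space defined by finitely many
forbidden words. -/
def IsSFT {A : Type*} (X : Set (ℤ → A)) : Prop :=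
  IsShiftSpace X ∧ ∃ F : Finset (List A),
    X = { x | ∀ u ∈ F, ∀ i : ℤ, ¬ OccursAt x u i }

/-- A code: a continuous shift-commuting map from `X` to `Y`. -/
def IsCode {A B : Type*} (X : Set (ℤ → A)) (Y : Set (ℤ → B))
    (φ : (ℤ → A) → (ℤ → B)) : Prop :=
  Set.MapsTo φ X Y ∧ @ContinuousOn _ _ (seqTop A) (seqTop B) φ X ∧
    ∀ x ∈ X, φ (shiftMap x) = shiftMap (φ x)

/-- A factor code: a surjective code. -/
def IsFactorCode {A B : Type*} (X : Set (ℤ → A)) (Y : Set (ℤ → B))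
    (φ : (ℤ → A) → (ℤ → B)) : Prop :=
  IsCode X Y φ ∧ Y ⊆ φ '' X

/-- A code is open if it maps (relatively) open subsets of `X` to
(relatively) open subsets of `Y`. -/
def IsOpenCode {A B : Type*} (X : Set (ℤ → A)) (Y : Set (ℤ → B))
    (φ : (ℤ → A) → (ℤ → B)) : Prop :=
  ∀ U : Set (ℤ → A), @IsOpen _ (seqTop A) U →
    ∃ V : Set (ℤ → B), @IsOpen _ (seqTop B) V ∧ φ '' (X ∩ U) = Y ∩ V

/-- A code has a uniform lifting length `l`. -/
def HasUniformLiftingLength {A B : Type*} (X : Set (ℤ → A)) (Y : Set (ℤ → B))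
    (φ : (ℤ → A) → (ℤ → B)) : Prop :=
  ∃ l : ℕ, ∀ k : ℕ, ∀ x ∈ X, ∀ y ∈ Y,
    (∀ i : ℤ, |i| ≤ (k : ℤ) + (l : ℤ) → φ x i = y i) →
    ∃ x' ∈ X, (∀ i : ℤ, |i| ≤ (k : ℤ) → x' i = x i) ∧ φ x' = y

/-- Right continuing code. -/
def IsRightContinuing {A B : Type*} (X : Set (ℤ → A)) (Y : Set (ℤ → B))
    (φ : (ℤ → A) → (ℤ → B)) : Prop :=
  ∀ x ∈ X, ∀ y ∈ Y, (∃ M : ℤ, ∀ i ≤ M, φ x i = y i) →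
    ∃ x' ∈ X, (∃ M : ℤ, ∀ i ≤ M, x' i = x i) ∧ φ x' = y

/-- Left continuing code. -/
def IsLeftContinuing {A B : Type*} (X : Set (ℤ → A)) (Y : Set (ℤ → B))
    (φ : (ℤ → A) → (ℤ → B)) : Prop :=
  ∀ x ∈ X, ∀ y ∈ Y, (∃ M : ℤ, ∀ i, M ≤ i → φ x i = y i) →
    ∃ x' ∈ X, (∃ M : ℤ, ∀ i, M ≤ i → x' i = x i) ∧ φ x' = y

/-- `n` is a right continuing retract of `φ`. -/
def IsRightRetract {A B : Type*} (X : Set (ℤ → A)) (Y : Set (ℤ → B))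
    (φ : (ℤ → A) → (ℤ → B)) (n : ℕ) : Prop :=
  ∀ x ∈ X, ∀ y ∈ Y, (∀ i : ℤ, i ≤ 0 → φ x i = y i) →
    ∃ x' ∈ X, φ x' = y ∧ ∀ i : ℤ, i ≤ -(n : ℤ) → x' i = x i

/-- `n` is a left continuing retract of `φ`. -/
def IsLeftRetract {A B : Type*} (X : Set (ℤ → A)) (Y : Set (ℤ → B))
    (φ : (ℤ → A) → (ℤ → B)) (n : ℕ) : Prop :=
  ∀ x ∈ X, ∀ y ∈ Y, (∀ i : ℤ, 0 ≤ i → φ x i = y i) →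
    ∃ x' ∈ X, φ x' = y ∧ ∀ i : ℤ, (n : ℤ) ≤ i → x' i = x i

/-- Right closing code. -/
def IsRightClosing {A B : Type*} (X : Set (ℤ → A))
    (φ : (ℤ → A) → (ℤ → B)) : Prop :=
  ∀ x ∈ X, ∀ x' ∈ X, (∃ M : ℤ, ∀ i ≤ M, x i = x' i) → φ x = φ x' → x = x'

/-- Left closing code. -/
def IsLeftClosing {A B : Type*} (X : Set (ℤ → A))
    (φ : (ℤ → A) → (ℤ → B)) : Prop :=
  ∀ x ∈ X, ∀ x' ∈ X, (∃ M : ℤ, ∀ i, M ≤ i → x i = x' i) → φ x = φ x' → x = x'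

/-- A sofic shift: a factor of a shift of finite type. -/
def IsSofic {B : Type*} (Y : Set (ℤ → B)) : Prop :=
  ∃ (C : Type) (_ : Fintype C) (Z : Set (ℤ → C)) (π : (ℤ → C) → (ℤ → B)),
    IsSFT Z ∧ IsFactorCode Z Y π

/-- Irreducibility of a shift space. -/
def IsIrreducibleShift {A : Type*} (X : Set (ℤ → A)) : Prop :=
  ∀ u v : List A, IsWordOf X u → IsWordOf X v →
    ∃ w : List A, IsWordOf X (u ++ w ++ v)

/-- Mixing shift space. -/
def IsMixingShift {A : Type*} (X : Set (ℤ → A)) : Prop :=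
  ∀ u v : List A, IsWordOf X u → IsWordOf X v →
    ∃ N : ℕ, ∀ n : ℕ, N ≤ n →
      ∃ w : List A, w.length = n ∧ IsWordOf X (u ++ w ++ v)

/-- The almost specification property. -/
def AlmostSpecified {A : Type*} (X : Set (ℤ → A)) : Prop :=
  ∃ N : ℕ, ∀ u v : List A, IsWordOf X u → IsWordOf X v →
    ∃ w : List A, w.length ≤ N ∧ IsWordOf X (u ++ w ++ v)

/-- The specification property. -/
def HasSpecification {A : Type*} (X : Set (ℤ → A)) : Prop :=
  ∃ N : ℕ, ∀ u v : List A, IsWordOf X u → IsWordOf X v →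
    ∃ w : List A, w.length = N ∧ IsWordOf X (u ++ w ++ v)

/-- A synchronizing word of `X`. -/
def IsSynchronizingWord {A : Type*} (X : Set (ℤ → A)) (v : List A) : Prop :=
  IsWordOf X v ∧ ∀ u w : List A, IsWordOf X (u ++ v) → IsWordOf X (v ++ w) →
    IsWordOf X (u ++ v ++ w)

/-- A synchronized system: an irreducible shift space with a synchronizing
word. -/
def IsSynchronizedSystem {A : Type*} (X : Set (ℤ → A)) : Prop :=
  IsIrreducibleShift X ∧ ∃ v : List A, IsSynchronizingWord X v

/-- A subshift of `X`. -/
def IsSubshiftOf {A : Type*} (X' X : Set (ℤ → A)) : Prop :=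
  IsShiftSpace X' ∧ X' ⊆ X

/-- The number of words of length `n` in the language of `X`. -/
noncomputable def wordCount {A : Type*} (X : Set (ℤ → A)) (n : ℕ) : ℕ :=
  Set.ncard { u : List A | u.length = n ∧ IsWordOf X u }

/-- The entropy `h(X) = lim (1/n) log |B_n(X)|` of a shift space (the limit
exists by subadditivity, hence equals the limsup used here). -/
noncomputable def entropy {A : Type*} (X : Set (ℤ → A)) : ℝ :=
  Filter.limsup (fun n : ℕ => Real.log (wordCount X n) / (n : ℝ)) Filter.atTop

/-- The periodic condition `P(X) ↘ P(Y)`. -/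
def PeriodicCondition {A B : Type*} (X : Set (ℤ → A)) (Y : Set (ℤ → B)) : Prop :=
  ∀ n : ℕ, 0 < n → (∃ x ∈ X, shiftMap^[n] x = x) → ∃ y ∈ Y, shiftMap^[n] y = y

/-- A cyclic cover `D_0, …, D_{p-1}` of a shift space `X`. -/
def IsCyclicCover {A : Type*} (X : Set (ℤ → A)) (p : ℕ)
    (D : ZMod p → Set (ℤ → A)) : Prop :=
  0 < p ∧
  (∀ i, @IsClosed _ (seqTop A) (D i) ∧ D i ⊆ X) ∧
  (⋃ i, D i) = X ∧
  (∀ i, shiftMap '' D i = D (i + 1)) ∧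
  (∀ i, ∀ U V : Set (ℤ → A), @IsOpen _ (seqTop A) U → @IsOpen _ (seqTop A) V →
    (D i ∩ U).Nonempty → (D i ∩ V).Nonempty →
    ∃ N : ℕ, ∀ n : ℕ, N ≤ n →
      ((shiftMap^[p * n] '' (D i ∩ U)) ∩ (D i ∩ V)).Nonempty) ∧
  (∀ i j, i ≠ j → ∀ U : Set (ℤ → A), @IsOpen _ (seqTop A) U →
    X ∩ U ⊆ D i ∩ D j → X ∩ U = ∅)

/-- A left ray of `X`, recorded as `z : ℕ → A` where `z n` is the symbol at
coordinate `-(n+1)`. -/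
def IsLeftRay {A : Type*} (X : Set (ℤ → A)) (z : ℕ → A) : Prop :=
  ∃ x ∈ X, ∀ n : ℕ, x (-((n : ℤ) + 1)) = z n

/-- Append the finite word `w` on the right of a left-infinite sequence `z`
(the last symbol of `w` ends up at coordinate `-1`). -/
def rayAppend {A : Type*} (z : ℕ → A) (w : List A) : ℕ → A :=
  fun n => if h : n < w.length then w.reverse.get ⟨n, by simpa using h⟩
           else z (n - w.length)

/-- A left transitive point: every word of `X` occurs in `x_{(-∞,0]}`. -/
def IsLeftTransitive {A : Type*} (X : Set (ℤ → A)) (x : ℤ → A) : Prop :=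
  ∀ u : List A, IsWordOf X u → ∃ i : ℤ, i + (u.length : ℤ) ≤ 1 ∧ OccursAt x u i

/-- A right transitive point: every word of `X` occurs in `x_{[0,∞)}`. -/
def IsRightTransitive {A : Type*} (X : Set (ℤ → A)) (x : ℤ → A) : Prop :=
  ∀ u : List A, IsWordOf X u → ∃ i : ℤ, 0 ≤ i ∧ OccursAt x u i

/-- Right continuing almost everywhere. -/
def IsRightContinuingAE {A B : Type*} (X : Set (ℤ → A)) (Y : Set (ℤ → B))
    (φ : (ℤ → A) → (ℤ → B)) : Prop :=
  ∀ x ∈ X, IsLeftTransitive X x → ∀ y ∈ Y, (∃ M : ℤ, ∀ i ≤ M, φ x i = y i) →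
    ∃ x' ∈ X, (∃ M : ℤ, ∀ i ≤ M, x' i = x i) ∧ φ x' = y

/-- Left continuing almost everywhere. -/
def IsLeftContinuingAE {A B : Type*} (X : Set (ℤ → A)) (Y : Set (ℤ → B))
    (φ : (ℤ → A) → (ℤ → B)) : Prop :=
  ∀ x ∈ X, IsRightTransitive X x → ∀ y ∈ Y, (∃ M : ℤ, ∀ i, M ≤ i → φ x i = y i) →
    ∃ x' ∈ X, (∃ M : ℤ, ∀ i, M ≤ i → x' i = x i) ∧ φ x' = y

/-- The bi-infinite concatenations of blocks `1 0^s`, `s ∈ S`: the positions of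
`1`s in `x` form the range of a strictly monotone `t : ℤ → ℤ` whose
consecutive gaps `t (n+1) - t n` all equal `s + 1` for some `s ∈ S`. -/
def GapConcat (S : Set ℕ) : Set (ℤ → Bool) :=
  { x | ∃ t : ℤ → ℤ, StrictMono t ∧ (∀ n : ℤ, ∃ s ∈ S, t (n + 1) = t n + (s : ℤ) + 1) ∧
      (∀ i : ℤ, x i = true ↔ ∃ n : ℤ, t n = i) }

/-- The `S`-gap shift: the smallest shift space over `{0,1}` containing all
bi-infinite concatenations of blocks from `{1 0^s : s ∈ S}`. -/
def SGapShift (S : Set ℕ) : Set (ℤ → Bool) :=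
  ⋂₀ { X : Set (ℤ → Bool) | IsShiftSpace X ∧ GapConcat S ⊆ X }

section Aux
variable {A B : Type*}

def shlZ (j : ℤ) (x : ℤ → A) : ℤ → A := fun i => x (i + j)

lemma shiftMap_inj {a b : ℤ → A} (h : shiftMap a = shiftMap b) : a = b := by
  funext i
  have := congrFun h (i - 1)
  simpa [shiftMap] using this

lemma shlZ_zero (x : ℤ → A) : shlZ 0 x = x := by
  funext i; simp [shlZ]

lemma shlZ_succ (j : ℤ) (x : ℤ → A) : shlZ (j + 1) x = shiftMap (shlZ j x) := by
  funext i; show x (i + (j + 1)) = x (i + 1 + j); ring_nf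

lemma shiftMap_shlZ_pred (j : ℤ) (x : ℤ → A) : shiftMap (shlZ (j - 1) x) = shlZ j x := by
  funext i; show x (i + 1 + (j - 1)) = x (i + j); ring_nf

variable {X : Set (ℤ → A)}

lemma mem_shlZ (hσ : shiftMap '' X = X) : ∀ (j : ℤ), ∀ x ∈ X, shlZ j x ∈ X := by
  have fwd : ∀ x ∈ X, shiftMap x ∈ X := fun x hx => hσ ▸ Set.mem_image_of_mem _ hx
  intro j
  induction j using Int.induction_on with
  | zero => intro x hx; rwa [shlZ_zero]
  | succ i ih => intro x hx; rw [shlZ_succ]; exact fwd _ (ih x hx)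
  | pred i ih =>
    intro x hx
    have hz : shlZ (-i) x ∈ X := ih x hx
    rw [← hσ] at hz
    obtain ⟨w, hw, hweq⟩ := hz
    have : w = shlZ (-i - 1) x := by
      apply shiftMap_inj
      rw [hweq, shiftMap_shlZ_pred]
    rwa [← this]

lemma code_shlZ {φ : (ℤ → A) → (ℤ → B)}
    (hσ : shiftMap '' X = X)
    (hc : ∀ x ∈ X, φ (shiftMap x) = shiftMap (φ x)) :
    ∀ (j : ℤ), ∀ x ∈ X, φ (shlZ j x) = shlZ j (φ x) := by
  intro j
  induction j using Int.induction_on with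
  | zero => intro x hx; rw [shlZ_zero, shlZ_zero]
  | succ i ih =>
    intro x hx
    rw [shlZ_succ, hc _ (mem_shlZ hσ i x hx), ih x hx, ← shlZ_succ]
  | pred i ih =>
    intro x hx
    apply shiftMap_inj
    rw [shiftMap_shlZ_pred (j := -i)]
    rw [← hc _ (mem_shlZ hσ (-i - 1) x hx), shiftMap_shlZ_pred (j := -i)]
    exact ih x hx

lemma exists_radius [Finite A] {φ : (ℤ → A) → (ℤ → B)}
    (hXc : @IsClosed _ (seqTop A) X)
    (hcont : @ContinuousOn _ _ (seqTop A) (seqTop B) φ X)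
    (hσ : shiftMap '' X = X)
    (hc : ∀ x ∈ X, φ (shiftMap x) = shiftMap (φ x)) :
    ∃ r : ℕ, ∀ j : ℤ, ∀ x ∈ X, ∀ x' ∈ X,
      (∀ i : ℤ, j - r ≤ i → i ≤ j + r → x i = x' i) → φ x j = φ x' j := by
  letI : TopologicalSpace A := ⊥
  letI : TopologicalSpace B := ⊥
  haveI : DiscreteTopology A := ⟨rfl⟩
  haveI : DiscreteTopology B := ⟨rfl⟩
  have hXc' : IsClosed X := hXc
  have hcont' : ContinuousOn φ X := hcont
  have hf : ContinuousOn (fun z : ℤ → A => φ z 0) X :=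
    (continuous_apply (0 : ℤ)).comp_continuousOn hcont'
  have key : ∀ x : X, ∃ I : Finset ℤ, ∀ z ∈ X,
      (∀ i ∈ I, z i = (x : ℤ → A) i) → φ z 0 = φ (x : ℤ → A) 0 := by
    rintro ⟨x, hx⟩
    have h1 : (fun z : ℤ → A => φ z 0) ⁻¹' {φ x 0} ∈ nhdsWithin x X :=
      hf x hx ((isOpen_discrete _).mem_nhds rfl)
    rw [mem_nhdsWithin] at h1
    obtain ⟨U, hUo, hxU, hU⟩ := h1
    have hU' : U ∈ nhds x := hUo.mem_nhds hxU
    rw [nhds_pi, Filter.mem_pi] at hU'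
    obtain ⟨I, hIfin, tt, htt, hsub⟩ := hU'
    refine ⟨hIfin.toFinset, ?_⟩
    intro z hz hagree
    have hzU : z ∈ U := by
      apply hsub
      intro i hi
      have hzi : z i = x i := hagree i (hIfin.mem_toFinset.mpr hi)
      rw [hzi]
      have := htt i
      simpa [nhds_discrete] using this
    exact hU ⟨hzU, hz⟩
  choose Ifun hIfun using key
  have hcover : X ⊆ ⋃ x : X, ((Ifun x : Set ℤ)).pi (fun i => {(x : ℤ → A) i}) := by
    intro z hz
    exact Set.mem_iUnion.2 ⟨⟨z, hz⟩, by simp [Set.mem_pi]⟩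
  obtain ⟨t, ht⟩ := hXc'.isCompact.elim_finite_subcover
    (fun x : X => ((Ifun x : Set ℤ)).pi (fun i => {(x : ℤ → A) i}))
    (fun x => isOpen_set_pi (Finset.finite_toSet _) fun a _ => isOpen_discrete _) hcover
  set I : Finset ℤ := t.sup Ifun with hI
  have key0 : ∀ z ∈ X, ∀ z' ∈ X, (∀ i ∈ I, z i = z' i) → φ z 0 = φ z' 0 := by
    intro z hz z' hz' hag
    obtain ⟨x0, hx0t, hzx0⟩ := Set.mem_iUnion₂.1 (ht hz)
    rw [Set.mem_pi] at hzx0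
    have h1 : ∀ i ∈ Ifun x0, z i = (x0 : ℤ → A) i := by
      intro i hi; simpa using hzx0 i (by simpa using hi)
    have h2 : ∀ i ∈ Ifun x0, z' i = (x0 : ℤ → A) i := by
      intro i hi
      rw [← hag i ((Finset.le_sup hx0t : Ifun x0 ≤ I) hi)]
      exact h1 i hi
    rw [hIfun x0 z hz h1, hIfun x0 z' hz' h2]
  refine ⟨I.sup fun i => i.natAbs, ?_⟩
  intro j x hx x' hx' hag
  have hx2 := mem_shlZ hσ j x hx
  have hx2' := mem_shlZ hσ j x' hx'
  have e1 : φ (shlZ j x) 0 = φ (shlZ j x') 0 := by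
    apply key0 _ hx2 _ hx2'
    intro i hi
    have hle : i.natAbs ≤ I.sup fun i => i.natAbs := Finset.le_sup hi
    show x (i + j) = x' (i + j)
    exact hag (i + j) (by omega) (by omega)
  have e2 := code_shlZ hσ hc j x hx
  have e2' := code_shlZ hσ hc j x' hx'
  rw [e2, e2'] at e1
  simpa [shlZ] using e1

lemma exists_margin {X : Set (ℤ → A)} (hX : IsSFT X) :
    ∃ m : ℕ, ∀ u ∈ X, ∀ v ∈ X, ∀ c : ℤ,
      (∀ i : ℤ, c - (m : ℤ) ≤ i → i ≤ c → u i = v i) →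
      (fun i : ℤ => if i ≤ c then u i else v i) ∈ X := by
  obtain ⟨hss, F, hF⟩ := hX
  refine ⟨F.sup List.length, ?_⟩
  intro u hu v hv c hag
  have hu' : ∀ w ∈ F, ∀ i : ℤ, ¬ OccursAt u w i := by rw [hF] at hu; exact hu
  have hv' : ∀ w ∈ F, ∀ i : ℤ, ¬ OccursAt v w i := by rw [hF] at hv; exact hv
  rw [hF]
  intro w hw i hocc
  by_cases hlen : w.length = 0
  · exact hu' w hw 0 (fun k => absurd k.isLt (by omega))
  have hwm : w.length ≤ F.sup List.length := Finset.le_sup hw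
  by_cases hcase : i + (w.length : ℤ) - 1 ≤ c
  · apply hu' w hw i
    intro k
    have hk := k.isLt
    have hkc : i + ((k : ℕ) : ℤ) ≤ c := by omega
    rw [← hocc k]
    simp [hkc]
  · apply hv' w hw i
    intro k
    have hk := k.isLt
    rw [← hocc k]
    by_cases h2 : i + ((k : ℕ) : ℤ) ≤ c
    · have h3 : c - ((F.sup List.length : ℕ) : ℤ) ≤ i + ((k : ℕ) : ℤ) := by omega
      have he := hag _ h3 h2
      simp [h2, he]
    · simp [h2]

lemma mem_of_clusterPt {α : Type*} [TopologicalSpace α] {u : ℕ → α} {p : α}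
    (h : ClusterPt p (Filter.map u atTop)) {C : Set α} (hC : IsClosed C)
    (hev : ∀ᶠ n in atTop, u n ∈ C) : p ∈ C := by
  have h1 : Filter.map u atTop ≤ 𝓟 C :=
    Filter.le_principal_iff.2 (Filter.mem_map.2 hev)
  have h2 : p ∈ closure C := mem_closure_iff_clusterPt.2 (h.mono h1)
  rwa [hC.closure_eq] at h2

lemma cyl_open {A : Type*} [TopologicalSpace A] [DiscreteTopology A] (L : ℕ) (x : ℤ → A) :
    IsOpen {z : ℤ → A | ∀ i : ℤ, i.natAbs ≤ L → z i = x i} := by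
  have hfin : {i : ℤ | i.natAbs ≤ L}.Finite :=
    (Set.finite_Icc (-(L : ℤ)) L).subset (fun i hi => by
      simp only [Set.mem_setOf_eq] at hi
      simp only [Set.mem_Icc]
      omega)
  have he : {z : ℤ → A | ∀ i : ℤ, i.natAbs ≤ L → z i = x i}
      = Set.pi {i : ℤ | i.natAbs ≤ L} (fun i => {x i}) := by
    ext z; simp [Set.mem_pi]
  rw [he]; exact isOpen_set_pi hfin fun a _ => isOpen_discrete _

lemma step1 {A B : Type*} [Fintype A] [Fintype B]
    (X : Set (ℤ → A)) (Y : Set (ℤ → B)) (φ : (ℤ → A) → (ℤ → B))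
    (hX : IsSFT X) (hY : IsShiftSpace Y) (hφ : IsCode X Y φ)
    (hrc : IsRightContinuing X Y φ) :
    ∃ N : ℕ, ∀ x ∈ X, ∀ y ∈ Y, (∀ i : ℤ, i ≤ 0 → φ x i = y i) →
      ∃ x', x' ∈ X ∧ (∀ i : ℤ, i ≤ -(N : ℤ) → x' i = x i) ∧
        (∀ i : ℤ, i ≤ 1 → φ x' i = y i) := by
  letI : TopologicalSpace A := ⊥
  letI : TopologicalSpace B := ⊥
  haveI : DiscreteTopology A := ⟨rfl⟩
  haveI : DiscreteTopology B := ⟨rfl⟩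
  have hXc : IsClosed X := hX.1.2.1
  have hYc : IsClosed Y := hY.2.1
  have hXσ : shiftMap '' X = X := hX.1.2.2
  have hcont : ContinuousOn φ X := hφ.2.1
  have hcomm : ∀ x ∈ X, φ (shiftMap x) = shiftMap (φ x) := hφ.2.2
  obtain ⟨r, hr⟩ := exists_radius hXc hφ.2.1 hXσ hcomm
  obtain ⟨m, hm⟩ := exists_margin hX
  by_contra hcon
  push_neg at hcon
  choose xs hxs ys hys hext hbad using hcon
  set u : ℕ → (ℤ → A) × (ℤ → B) := fun n => (xs n, ys n) with hudef
  have hle : Filter.map u atTop ≤ 𝓟 (X ×ˢ Y) :=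
    Filter.le_principal_iff.2 (Filter.mem_map.2
      (Filter.Eventually.of_forall fun n => Set.mem_prod.2 ⟨hxs n, hys n⟩))
  obtain ⟨p, hpXY, hp⟩ := (hXc.isCompact.prod hYc.isCompact).exists_clusterPt hle
  have hpX : p.1 ∈ X := hpXY.1
  have hpY : p.2 ∈ Y := hpXY.2
  have hplim : ∀ i : ℤ, i ≤ 0 → φ p.1 i = p.2 i := by
    intro i hi
    have hcc : ContinuousOn (fun q : (ℤ → A) × (ℤ → B) => (φ q.1 i, q.2 i))
        (X ×ˢ (Set.univ : Set (ℤ → B))) := by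
      apply ContinuousOn.prodMk
      · exact (continuous_apply i).comp_continuousOn
          (hφ.2.1.comp continuous_fst.continuousOn (fun q hq => hq.1))
      · exact ((continuous_apply i).comp continuous_snd).continuousOn
    have hCc : IsClosed ((X ×ˢ (Set.univ : Set (ℤ → B))) ∩
        (fun q : (ℤ → A) × (ℤ → B) => (φ q.1 i, q.2 i)) ⁻¹' (Set.diagonal B)) :=
      ContinuousOn.preimage_isClosed_of_isClosed hcc
        (hXc.prod isClosed_univ) isClosed_diagonal
    have hmem := mem_of_clusterPt hp hCc
      (Filter.Eventually.of_forall fun n =>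
        ⟨Set.mem_prod.2 ⟨hxs n, Set.mem_univ _⟩, hext n i hi⟩)
    exact hmem.2
  obtain ⟨xb, hxb, ⟨M, hM⟩, hφxb⟩ := hrc p.1 hpX p.2 hpY ⟨0, fun i hi => hplim i hi⟩
  set M₀ : ℤ := min M 0 with hM₀def
  have hM₀le : M₀ ≤ 0 := min_le_right _ _
  have hMag : ∀ i : ℤ, i ≤ M₀ → xb i = p.1 i :=
    fun i hi => hM i (le_trans hi (min_le_left _ _))
  set L : ℕ := M₀.natAbs + m + 2 * r + 2 with hLdef
  have hUopen : IsOpen ({z : ℤ → A | ∀ i : ℤ, i.natAbs ≤ L → z i = p.1 i} ×ˢ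
      {z : ℤ → B | ∀ i : ℤ, i.natAbs ≤ L → z i = p.2 i}) :=
    (cyl_open L p.1).prod (cyl_open L p.2)
  have hUmem : ({z : ℤ → A | ∀ i : ℤ, i.natAbs ≤ L → z i = p.1 i} ×ˢ
      {z : ℤ → B | ∀ i : ℤ, i.natAbs ≤ L → z i = p.2 i}) ∈ nhds p :=
    hUopen.mem_nhds (Set.mem_prod.2 ⟨fun i _ => rfl, fun i _ => rfl⟩)
  have hp' : MapClusterPt p atTop u := hp
  have hfreq := mapClusterPt_iff_frequently.1 hp' _ hUmem
  obtain ⟨n, hnge, hnmem⟩ := Filter.frequently_atTop.1 hfreq L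
  have hagA : ∀ i : ℤ, i.natAbs ≤ L → xs n i = p.1 i := hnmem.1
  have hagB : ∀ i : ℤ, i.natAbs ≤ L → ys n i = p.2 i := hnmem.2
  have hxbag : ∀ i : ℤ, M₀ - (m : ℤ) - 2 * r ≤ i → i ≤ M₀ → xs n i = xb i := by
    intro i h1 h2
    rw [hagA i (by omega), ← hMag i h2]
  have hwX : (fun i : ℤ => if i ≤ M₀ then xs n i else xb i) ∈ X :=
    hm (xs n) (hxs n) xb hxb M₀ (fun i h1 h2 => hxbag i (by omega) h2)
  have hwleft : ∀ i : ℤ, i ≤ M₀ →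
      (fun i : ℤ => if i ≤ M₀ then xs n i else xb i) i = xs n i := by
    intro i hi; simp only [if_pos hi]
  have hwright : ∀ i : ℤ, M₀ - (m : ℤ) - 2 * r ≤ i →
      (fun i : ℤ => if i ≤ M₀ then xs n i else xb i) i = xb i := by
    intro i h1
    by_cases h2 : i ≤ M₀
    · simp only [if_pos h2]; exact hxbag i h1 h2
    · simp only [if_neg h2]
  obtain ⟨i, hi1, hineq⟩ := hbad n _ hwX (fun i hi => hwleft i (by omega))
  apply hineq
  by_cases hcase : i ≤ M₀ - r
  · have he : φ (fun i : ℤ => if i ≤ M₀ then xs n i else xb i) i = φ (xs n) i :=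
      hr i _ hwX (xs n) (hxs n) (fun j hj1 hj2 => hwleft j (by omega))
    rw [he]; exact hext n i (by omega)
  · have he : φ (fun i : ℤ => if i ≤ M₀ then xs n i else xb i) i = φ xb i :=
      hr i _ hwX xb hxb (fun j hj1 hj2 => hwright j (by omega))
    rw [he, hφxb]
    exact (hagB i (by omega)).symm

end Aux

/-- A right continuing code on a shift of finite type has a
right continuing retract. -/
theorem rightContinuing_on_SFT_has_retract
    {A B : Type*} [Fintype A] [Fintype B]
    (X : Set (ℤ → A)) (Y : Set (ℤ → B)) (φ : (ℤ → A) → (ℤ → B))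
    (hX : IsSFT X) (hY : IsShiftSpace Y) (hφ : IsCode X Y φ)
    (hrc : IsRightContinuing X Y φ) :
    ∃ n : ℕ, IsRightRetract X Y φ n := by
  letI : TopologicalSpace A := ⊥
  letI : TopologicalSpace B := ⊥
  haveI : DiscreteTopology A := ⟨rfl⟩
  haveI : DiscreteTopology B := ⟨rfl⟩
  obtain ⟨N, hN⟩ := step1 X Y φ hX hY hφ hrc
  have hXc : IsClosed X := hX.1.2.1
  have hXσ : shiftMap '' X = X := hX.1.2.2
  have hYσ : shiftMap '' Y = Y := hY.2.2
  have hcont : ContinuousOn φ X := hφ.2.1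
  have hcomm : ∀ x ∈ X, φ (shiftMap x) = shiftMap (φ x) := hφ.2.2
  refine ⟨N, ?_⟩
  intro x hx y hy hext
  have hstep : ∀ k : ℕ, ∃ z, z ∈ X ∧ (∀ i : ℤ, i ≤ -(N : ℤ) → z i = x i) ∧
      (∀ i : ℤ, i ≤ (k : ℤ) → φ z i = y i) := by
    intro k
    induction k with
    | zero => exact ⟨x, hx, fun i _ => rfl, fun i hi => hext i (by exact_mod_cast hi)⟩
    | succ k ih =>
      obtain ⟨z, hzX, hz1, hz2⟩ := ih
      have h1 : shlZ (k : ℤ) z ∈ X := mem_shlZ hXσ _ z hzX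
      have h2 : shlZ (k : ℤ) y ∈ Y := mem_shlZ hYσ _ y hy
      have h3 : ∀ i : ℤ, i ≤ 0 → φ (shlZ (k : ℤ) z) i = shlZ (k : ℤ) y i := by
        intro i hi
        rw [code_shlZ hXσ hcomm _ z hzX]
        exact hz2 (i + k) (by omega)
      obtain ⟨w, hwX, hw1, hw2⟩ := hN (shlZ (k : ℤ) z) h1 (shlZ (k : ℤ) y) h2 h3
      refine ⟨shlZ (-(k : ℤ)) w, mem_shlZ hXσ _ w hwX, ?_, ?_⟩
      · intro i hi
        have e : shlZ (-(k : ℤ)) w i = w (i - k) := by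
          show w (i + -(k : ℤ)) = w (i - k); ring_nf
        rw [e, hw1 (i - k) (by omega)]
        show z (i - (k : ℤ) + k) = x i
        rw [show i - (k : ℤ) + k = i by ring]
        exact hz1 i hi
      · intro i hi
        rw [code_shlZ hXσ hcomm _ w hwX]
        show φ w (i + -(k : ℤ)) = y i
        rw [show i + -(k : ℤ) = i - k by ring, hw2 (i - k) (by push_cast at hi ⊢; omega)]
        show y (i - (k : ℤ) + k) = y i
        rw [show i - (k : ℤ) + k = i by ring]
  choose zs hzX hz1 hz2 using hstep
  have hle : Filter.map zs atTop ≤ 𝓟 X :=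
    Filter.le_principal_iff.2 (Filter.mem_map.2 (Filter.Eventually.of_forall hzX))
  obtain ⟨x', hx', hcl⟩ := hXc.isCompact.exists_clusterPt hle
  refine ⟨x', hx', ?_, ?_⟩
  · funext j
    have hC : IsClosed (X ∩ (fun z => φ z j) ⁻¹' {y j}) :=
      ContinuousOn.preimage_isClosed_of_isClosed
        ((continuous_apply j).comp_continuousOn hcont) hXc isClosed_singleton
    have hev : ∀ᶠ k in atTop, zs k ∈ X ∩ (fun z => φ z j) ⁻¹' {y j} := by
      filter_upwards [Filter.eventually_ge_atTop j.toNat] with k hk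
      exact ⟨hzX k, hz2 k j (by omega)⟩
    exact (mem_of_clusterPt hcl hC hev).2
  · intro i hi
    have hC : IsClosed ((fun z : ℤ → A => z i) ⁻¹' {x i}) :=
      IsClosed.preimage (continuous_apply i) isClosed_singleton
    have hmem := mem_of_clusterPt hcl hC (Filter.Eventually.of_forall fun k =>
      show zs k i ∈ ({x i} : Set A) from hz1 k i hi)
    exact hmem
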